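/- Let φ be a scalar polynomial on a triangular face f (with barycentric coordinates λ₁, λ₂, λ₃ of the face) such that the tangential derivative of φ vanishes on each edge of f and φ vanishes at the vertices. Then φ = λ₁λ₂λ₃ ψ for some polynomial ψ of degree deg(φ) − 3. -/

import Mathlib

open MvPolynomial

namespace FaceBubbleAux

/-- Chain rule for substituting univariate polynomials into a bivariate polynomial. -/
lemma deriv_aeval (g : Fin 2 → Polynomial ℝ) (φ : MvPolynomial (Fin 2) ℝ) :
    Polynomial.derivative (MvPolynomial.aeval g φ) =
      Polynomial.derivative (g 0) * MvPolynomial.aeval g (pderiv 0 φ)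
      + Polynomial.derivative (g 1) * MvPolynomial.aeval g (pderiv 1 φ) := by
  induction φ using MvPolynomial.induction_on with
  | C a => simp
  | add p q hp hq => simp only [map_add, Polynomial.derivative_add, hp, hq]; ring
  | mul_X p i hp =>
    fin_cases i <;>
      simp only [map_mul, MvPolynomial.aeval_X, Polynomial.derivative_mul, pderiv_mul, pderiv_X,
        Pi.single_eq_same, Pi.single_eq_of_ne, hp] <;>
      · simp [pderiv_X, Pi.single_apply]
        ring

lemma eval_aeval (g : Fin 2 → Polynomial ℝ) (φ : MvPolynomial (Fin 2) ℝ) (t : ℝ) :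
    (MvPolynomial.aeval g φ).eval t = MvPolynomial.eval (fun i => (g i).eval t) φ := by
  induction φ using MvPolynomial.induction_on <;> simp [*]

lemma line_vanish (p : Polynomial ℝ)
    (hder : ∀ t ∈ Set.Icc (0:ℝ) 1, (Polynomial.derivative p).eval t = 0)
    (t₀ : ℝ) (h0 : p.eval t₀ = 0) : p = 0 := by
  have hd : Polynomial.derivative p = 0 := by
    apply Polynomial.eq_zero_of_infinite_isRoot
    apply Set.Infinite.mono (s := Set.Icc (0:ℝ) 1)
    · exact fun t ht => hder t ht
    · exact Set.Icc_infinite (by norm_num)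
  have hc := Polynomial.eq_C_of_derivative_eq_zero hd
  rw [hc] at h0 ⊢
  simp only [Polynomial.eval_C] at h0
  rw [h0, map_zero]

lemma rem_dvd (j : Fin 2) (f : MvPolynomial (Fin 2) ℝ) (q : MvPolynomial (Fin 2) ℝ) :
    (X j - f) ∣ q - MvPolynomial.aeval (fun i => if i = j then f else X i) q := by
  set s : MvPolynomial (Fin 2) ℝ →ₐ[ℝ] MvPolynomial (Fin 2) ℝ :=
    MvPolynomial.aeval (fun i => if i = j then f else X i) with hs
  induction q using MvPolynomial.induction_on with
  | C a => simp [MvPolynomial.algebraMap_eq]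
  | add p q hp hq =>
    simpa only [map_add, add_sub_add_comm] using dvd_add hp hq
  | mul_X p i hp =>
    rw [map_mul]
    have key : p * X i - s p * s (X i) =
        (p - s p) * X i + s p * (X i - s (X i)) := by ring
    rw [key]
    refine dvd_add (hp.mul_right _) ?_
    by_cases h : i = j
    · subst h
      rw [hs, MvPolynomial.aeval_X, if_pos rfl]
      exact Dvd.intro_left _ rfl
    · rw [hs, MvPolynomial.aeval_X, if_neg h, sub_self, mul_zero]
      exact dvd_zero _

lemma degsum (m : Fin 2 →₀ ℕ) : (m.sum fun _ e => e) = m 0 + m 1 := by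
  rw [Finsupp.sum_fintype] <;> simp [Fin.sum_univ_two]

lemma totalDegree_mul_eq {p q : MvPolynomial (Fin 2) ℝ} (hp : p ≠ 0) (hq : q ≠ 0) :
    (p * q).totalDegree = p.totalDegree + q.totalDegree := by
  classical
  set D : (Fin 2 →₀ ℕ) → ℕ ×ₗ ℕ := fun m => toLex (m 0 + m 1, m 0) with hD
  have hDinj : Function.Injective D := by
    intro a b hab
    have h1 : a 0 + a 1 = b 0 + b 1 ∧ a 0 = b 0 := Prod.mk.injEq .. ▸ by
      simpa [hD, Prod.ext_iff] using hab
    ext i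
    fin_cases i
    · exact h1.2
    · show a 1 = b 1
      omega
  have hadd : ∀ a b, D (a + b) = D a + D b := by
    intro a b
    simp only [hD, Finsupp.add_apply, ← toLex_add, Prod.mk_add_mk]
    congr 1
    ext
    · simp; omega
    · simp
  have key : ∀ r : MvPolynomial (Fin 2) ℝ, r ≠ 0 →
      (ofLex (AddMonoidAlgebra.supDegree D r)).1 = r.totalDegree := by
    intro r hr
    obtain ⟨a, ha, he⟩ := AddMonoidAlgebra.exists_supDegree_mem_support D hr
    apply le_antisymm
    · rw [he]
      have : (ofLex (D a)).1 = a 0 + a 1 := rfl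
      rw [this, ← degsum]
      exact MvPolynomial.le_totalDegree ha
    · rw [totalDegree]
      apply Finset.sup_le
      intro m hm
      have hle : D m ≤ AddMonoidAlgebra.supDegree D r := Finset.le_sup hm
      rw [degsum]
      have : (ofLex (D m)).1 ≤ (ofLex (AddMonoidAlgebra.supDegree D r)).1 := by
        rw [he] at hle ⊢
        rcases (Prod.Lex.le_iff).1 hle with h | h
        · exact le_of_lt h
        · exact le_of_eq h.1
      exact this
  have hL : AddMonoidAlgebra.leadingCoeff D p * AddMonoidAlgebra.leadingCoeff D q ≠ 0 := by
    apply mul_ne_zero <;> rw [Ne, AddMonoidAlgebra.leadingCoeff_eq_zero hDinj] <;> assumption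
  have h := AddMonoidAlgebra.supDegree_mul hDinj hadd hL hp hq
  rw [← key _ (mul_ne_zero hp hq), ← key p hp, ← key q hq, h]
  rfl

lemma prime_X0 : Prime (X 0 : MvPolynomial (Fin 2) ℝ) := by
  have := (MulEquiv.prime_iff (MvPolynomial.finSuccEquiv ℝ 1).toMulEquiv
    (p := (X 0 : MvPolynomial (Fin 2) ℝ))).symm
  rw [this]
  simpa [MvPolynomial.finSuccEquiv_X_zero] using
    Polynomial.prime_X (R := MvPolynomial (Fin 1) ℝ)

lemma prime_X1 : Prime (X 1 : MvPolynomial (Fin 2) ℝ) := by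
  have h := (MulEquiv.prime_iff (MvPolynomial.renameEquiv ℝ (Equiv.swap (0 : Fin 2) 1)).toMulEquiv
    (p := (X 0 : MvPolynomial (Fin 2) ℝ))).symm.1 prime_X0
  simpa using h

noncomputable def tau : MvPolynomial (Fin 2) ℝ ≃ₐ[ℝ] MvPolynomial (Fin 2) ℝ :=
  AlgEquiv.ofAlgHom
    (MvPolynomial.aeval fun i => if i = 0 then X 0 else 1 - X 0 - X 1)
    (MvPolynomial.aeval fun i => if i = 0 then X 0 else 1 - X 0 - X 1)
    (by apply MvPolynomial.algHom_ext; intro i; fin_cases i <;> simp)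
    (by apply MvPolynomial.algHom_ext; intro i; fin_cases i <;> simp)

lemma prime_L3 : Prime ((1 : MvPolynomial (Fin 2) ℝ) - X 0 - X 1) := by
  have h := (MulEquiv.prime_iff tau.toMulEquiv (p := (X 1 : MvPolynomial (Fin 2) ℝ))).symm.1 prime_X1
  simpa [tau] using h

lemma tdL3 : ((1 : MvPolynomial (Fin 2) ℝ) - X 0 - X 1).totalDegree = 1 := by
  apply le_antisymm
  · have h1 : ((1:MvPolynomial (Fin 2) ℝ) - X 0).totalDegree ≤ 1 :=
      (MvPolynomial.totalDegree_sub _ _).trans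
        (by simp [MvPolynomial.totalDegree_one, MvPolynomial.totalDegree_X])
    exact (MvPolynomial.totalDegree_sub _ _).trans
      (by simp [h1, MvPolynomial.totalDegree_X])
  · have hc : MvPolynomial.coeff (Finsupp.single (1 : Fin 2) 1)
        ((1 : MvPolynomial (Fin 2) ℝ) - X 0 - X 1) = -1 := by
      rw [MvPolynomial.coeff_sub, MvPolynomial.coeff_sub]
      have e1 : MvPolynomial.coeff (Finsupp.single (1 : Fin 2) 1)
          (1 : MvPolynomial (Fin 2) ℝ) = 0 := by
        rw [MvPolynomial.coeff_one, if_neg]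
        exact fun h => by simpa [eq_comm, Finsupp.single_eq_zero] using h
      have e2 : MvPolynomial.coeff (Finsupp.single (1 : Fin 2) 1)
          (X 0 : MvPolynomial (Fin 2) ℝ) = 0 := by
        rw [MvPolynomial.coeff_X', if_neg]
        simp [Finsupp.single_eq_single_iff]
      have e3 : MvPolynomial.coeff (Finsupp.single (1 : Fin 2) 1)
          (X 1 : MvPolynomial (Fin 2) ℝ) = 1 := by rw [MvPolynomial.coeff_X, if_pos rfl]
      rw [e1, e2, e3]
      norm_num
    have hmem : Finsupp.single (1 : Fin 2) 1 ∈
        ((1 : MvPolynomial (Fin 2) ℝ) - X 0 - X 1).support := by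
      rw [MvPolynomial.mem_support_iff, hc]; norm_num
    have := MvPolynomial.le_totalDegree hmem
    simpa [degsum] using this

lemma eval_aeval' (g : Fin 2 → MvPolynomial (Fin 2) ℝ) (φ : MvPolynomial (Fin 2) ℝ)
    (x : Fin 2 → ℝ) :
    MvPolynomial.eval x (MvPolynomial.aeval g φ) =
      MvPolynomial.eval (fun i => MvPolynomial.eval x (g i)) φ := by
  induction φ using MvPolynomial.induction_on <;>
    simp [*, MvPolynomial.aeval_eq_bind₁] at *

end FaceBubbleAux

/-- A polynomial on the (reference) triangular face with vertices `(0,0), (1,0), (0,1)`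
whose tangential derivative vanishes on each edge and which vanishes at the vertices
is divisible by the product `λ₁λ₂λ₃` of the barycentric coordinates. -/
theorem face_bubble_factorization (φ : MvPolynomial (Fin 2) ℝ)
    -- tangential derivative vanishes along the edge `x₂ = 0` (tangent `e₁`)
    (h1 : ∀ x : Fin 2 → ℝ, x 1 = 0 → 0 ≤ x 0 → x 0 ≤ 1 → eval x (pderiv 0 φ) = 0)
    -- tangential derivative vanishes along the edge `x₁ = 0` (tangent `e₂`)
    (h2 : ∀ x : Fin 2 → ℝ, x 0 = 0 → 0 ≤ x 1 → x 1 ≤ 1 → eval x (pderiv 1 φ) = 0)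
    -- tangential derivative vanishes along the edge `x₁ + x₂ = 1` (tangent `(1,-1)`)
    (h3 : ∀ x : Fin 2 → ℝ, x 0 + x 1 = 1 → 0 ≤ x 0 → 0 ≤ x 1 →
      eval x (pderiv 0 φ) - eval x (pderiv 1 φ) = 0)
    -- `φ` vanishes at the three vertices
    (hv1 : eval (fun _ => (0 : ℝ)) φ = 0)
    (hv2 : eval (fun i : Fin 2 => if i = 0 then (1 : ℝ) else 0) φ = 0)
    (hv3 : eval (fun i : Fin 2 => if i = 0 then (0 : ℝ) else 1) φ = 0) :
    ∃ ψ : MvPolynomial (Fin 2) ℝ,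
      φ = X 0 * X 1 * (1 - X 0 - X 1) * ψ ∧ ψ.totalDegree ≤ φ.totalDegree - 3 := by
  classical
  -- edge parametrizations
  set g1 : Fin 2 → Polynomial ℝ := fun i => if i = 0 then Polynomial.X else 0 with hg1
  set g2 : Fin 2 → Polynomial ℝ := fun i => if i = 0 then 0 else Polynomial.X with hg2
  set g3 : Fin 2 → Polynomial ℝ := fun i => if i = 0 then Polynomial.X else 1 - Polynomial.X
    with hg3
  -- φ vanishes on the line x₂ = 0
  have hline1 : MvPolynomial.aeval g1 φ = 0 := by
    refine FaceBubbleAux.line_vanish _ ?_ 0 ?_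
    · intro t ht
      rw [FaceBubbleAux.deriv_aeval]
      have e0 : Polynomial.derivative (g1 0) = 1 := by simp [hg1]
      have e1 : Polynomial.derivative (g1 1) = 0 := by simp [hg1]
      rw [e0, e1]
      simp only [one_mul, zero_mul, add_zero]
      rw [FaceBubbleAux.eval_aeval]
      apply h1
      · simp [hg1]
      · simpa [hg1] using ht.1
      · simpa [hg1] using ht.2
    · rw [FaceBubbleAux.eval_aeval]
      have hfun : (fun i => (g1 i).eval 0) = fun _ : Fin 2 => (0 : ℝ) := by
        funext i; fin_cases i <;> simp [hg1]
      rw [hfun]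
      exact hv1
  -- φ vanishes on the line x₁ = 0
  have hline2 : MvPolynomial.aeval g2 φ = 0 := by
    refine FaceBubbleAux.line_vanish _ ?_ 0 ?_
    · intro t ht
      rw [FaceBubbleAux.deriv_aeval]
      have e0 : Polynomial.derivative (g2 0) = 0 := by simp [hg2]
      have e1 : Polynomial.derivative (g2 1) = 1 := by simp [hg2]
      rw [e0, e1]
      simp only [one_mul, zero_mul, zero_add]
      rw [FaceBubbleAux.eval_aeval]
      apply h2
      · simp [hg2]
      · simpa [hg2] using ht.1
      · simpa [hg2] using ht.2
    · rw [FaceBubbleAux.eval_aeval]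
      have hfun : (fun i => (g2 i).eval 0) = fun _ : Fin 2 => (0 : ℝ) := by
        funext i; fin_cases i <;> simp [hg2]
      rw [hfun]
      exact hv1
  -- φ vanishes on the line x₁ + x₂ = 1
  have hline3 : MvPolynomial.aeval g3 φ = 0 := by
    refine FaceBubbleAux.line_vanish _ ?_ 1 ?_
    · intro t ht
      rw [FaceBubbleAux.deriv_aeval]
      have e0 : Polynomial.derivative (g3 0) = 1 := by simp [hg3]
      have e1 : Polynomial.derivative (g3 1) = -1 := by simp [hg3]
      rw [e0, e1]
      simp only [one_mul, neg_one_mul, ← sub_eq_add_neg]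
      rw [Polynomial.eval_sub, FaceBubbleAux.eval_aeval, FaceBubbleAux.eval_aeval]
      apply h3
      · simp [hg3]
      · simpa [hg3] using ht.1
      · simp [hg3]
        linarith [ht.2]
    · rw [FaceBubbleAux.eval_aeval]
      have hfun : (fun i => (g3 i).eval 1) =
          fun i : Fin 2 => if i = 0 then (1 : ℝ) else 0 := by
        funext i; fin_cases i <;> simp [hg3]
      rw [hfun]
      exact hv2
  -- divisibility by X 1
  have hdvd1 : (X 1 : MvPolynomial (Fin 2) ℝ) ∣ φ := by
    have hs1 : MvPolynomial.aeval
        (fun i : Fin 2 => if i = 1 then (0 : MvPolynomial (Fin 2) ℝ) else X i) φ = 0 := by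
      apply MvPolynomial.funext
      intro x
      rw [FaceBubbleAux.eval_aeval', map_zero]
      have hfun : (fun i => MvPolynomial.eval x
          (if i = (1 : Fin 2) then (0 : MvPolynomial (Fin 2) ℝ) else X i)) =
          fun i => (g1 i).eval (x 0) := by
        funext i; fin_cases i <;> simp [hg1]
      rw [hfun, ← FaceBubbleAux.eval_aeval, hline1]
      simp
    have h := FaceBubbleAux.rem_dvd 1 0 φ
    rw [hs1, sub_zero, sub_zero] at h
    exact h
  -- divisibility by X 0
  have hdvd0 : (X 0 : MvPolynomial (Fin 2) ℝ) ∣ φ := by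
    have hs0 : MvPolynomial.aeval
        (fun i : Fin 2 => if i = 0 then (0 : MvPolynomial (Fin 2) ℝ) else X i) φ = 0 := by
      apply MvPolynomial.funext
      intro x
      rw [FaceBubbleAux.eval_aeval', map_zero]
      have hfun : (fun i => MvPolynomial.eval x
          (if i = (0 : Fin 2) then (0 : MvPolynomial (Fin 2) ℝ) else X i)) =
          fun i => (g2 i).eval (x 1) := by
        funext i; fin_cases i <;> simp [hg2]
      rw [hfun, ← FaceBubbleAux.eval_aeval, hline2]
      simp
    have h := FaceBubbleAux.rem_dvd 0 0 φ
    rw [hs0, sub_zero, sub_zero] at h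
    exact h
  -- divisibility by 1 - X 0 - X 1
  have hdvdL : ((1 : MvPolynomial (Fin 2) ℝ) - X 0 - X 1) ∣ φ := by
    have hs3 : MvPolynomial.aeval
        (fun i : Fin 2 => if i = 1 then (1 - X 0 : MvPolynomial (Fin 2) ℝ) else X i) φ = 0 := by
      apply MvPolynomial.funext
      intro x
      rw [FaceBubbleAux.eval_aeval', map_zero]
      have hfun : (fun i => MvPolynomial.eval x
          (if i = (1 : Fin 2) then (1 - X 0 : MvPolynomial (Fin 2) ℝ) else X i)) =
          fun i => (g3 i).eval (x 0) := by
        funext i; fin_cases i <;> simp [hg3]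
      rw [hfun, ← FaceBubbleAux.eval_aeval, hline3]
      simp
    have h := FaceBubbleAux.rem_dvd 1 (1 - X 0) φ
    rw [hs3, sub_zero] at h
    have e : ((1 : MvPolynomial (Fin 2) ℝ) - X 0 - X 1) = -(X 1 - (1 - X 0)) := by ring
    rw [e]
    exact (neg_dvd).2 h
  -- the linear factors do not divide each other
  have nd1 : ¬ (X 1 : MvPolynomial (Fin 2) ℝ) ∣ X 0 := by
    rintro ⟨c, hc⟩
    have h := congrArg (MvPolynomial.eval (fun i : Fin 2 => if i = 0 then (1 : ℝ) else 0)) hc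
    simp at h
  have ndL0 : ¬ ((1 : MvPolynomial (Fin 2) ℝ) - X 0 - X 1) ∣ X 0 := by
    rintro ⟨c, hc⟩
    have h := congrArg (MvPolynomial.eval (fun i : Fin 2 => if i = 0 then (1 : ℝ) else 0)) hc
    simp at h
  have ndL1 : ¬ ((1 : MvPolynomial (Fin 2) ℝ) - X 0 - X 1) ∣ X 1 := by
    rintro ⟨c, hc⟩
    have h := congrArg (MvPolynomial.eval (fun i : Fin 2 => if i = 0 then (0 : ℝ) else 1)) hc
    simp at h
  -- combine the three divisibilities
  obtain ⟨a, ha⟩ := hdvd0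
  rw [ha] at hdvd1 hdvdL
  have h1a : (X 1 : MvPolynomial (Fin 2) ℝ) ∣ a := by
    rcases (FaceBubbleAux.prime_X1.dvd_mul).1 hdvd1 with h | h
    · exact absurd h nd1
    · exact h
  obtain ⟨b, hb⟩ := h1a
  rw [hb] at hdvdL
  have hLb : ((1 : MvPolynomial (Fin 2) ℝ) - X 0 - X 1) ∣ b := by
    rcases (FaceBubbleAux.prime_L3.dvd_mul).1 hdvdL with h | h
    · exact absurd h ndL0
    · rcases (FaceBubbleAux.prime_L3.dvd_mul).1 h with h' | h'
      · exact absurd h' ndL1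
      · exact h'
  obtain ⟨ψ, hψ⟩ := hLb
  have hfac : φ = X 0 * X 1 * (1 - X 0 - X 1) * ψ := by rw [ha, hb, hψ]; ring
  refine ⟨ψ, hfac, ?_⟩
  by_cases hψ0 : ψ = 0
  · rw [hψ0, MvPolynomial.totalDegree_zero]
    exact Nat.zero_le _
  · have hX0 : (X 0 : MvPolynomial (Fin 2) ℝ) ≠ 0 := MvPolynomial.X_ne_zero 0
    have hX1 : (X 1 : MvPolynomial (Fin 2) ℝ) ≠ 0 := MvPolynomial.X_ne_zero 1
    have hL3 : ((1 : MvPolynomial (Fin 2) ℝ) - X 0 - X 1) ≠ 0 := FaceBubbleAux.prime_L3.ne_zero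
    have e1 := FaceBubbleAux.totalDegree_mul_eq (mul_ne_zero (mul_ne_zero hX0 hX1) hL3) hψ0
    have e2 := FaceBubbleAux.totalDegree_mul_eq (mul_ne_zero hX0 hX1) hL3
    have e3 := FaceBubbleAux.totalDegree_mul_eq hX0 hX1
    rw [hfac, e1, e2, e3, MvPolynomial.totalDegree_X, MvPolynomial.totalDegree_X,
      FaceBubbleAux.tdL3]
    omega
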